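/- Tradeoff lemma for exponents: let (α_n(a)), (β_n(a)), (α_n), (β_n) be sequences in [0,1] (with β-values nonnegative) satisfying the Neyman–Pearson inequality α_n(a) + e^{na} β_n(a) ≤ α_n + e^{na} β_n for all n. Define ζ(a) = liminf −(1/n) log β_n(a), ζ[T] = liminf −(1/n) log β_n, η[T] = liminf −(1/n) log α_n. Then ζ(a) ≥ min( ζ[T], a + η[T] ). -/

import Mathlib

open Filter

/-- The liminf exponential rate `liminf -(1/n) log p n`, with the convention
that the exponent is `+∞` when `p n = 0` (i.e. `log 0 = -∞`). -/
noncomputable def liminfExpRate (p : ℕ → ℝ) : EReal :=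
  Filter.liminf (fun n => if p n = 0 then (⊤ : EReal)
    else ((-(1 / (n : ℝ)) * Real.log (p n) : ℝ) : EReal)) Filter.atTop

/-- The limsup exponential rate `limsup -(1/n) log p n`, with the convention
that the exponent is `+∞` when `p n = 0`. -/
noncomputable def limsupExpRate (p : ℕ → ℝ) : EReal :=
  Filter.limsup (fun n => if p n = 0 then (⊤ : EReal)
    else ((-(1 / (n : ℝ)) * Real.log (p n) : ℝ) : EReal)) Filter.atTop

/-- From a strict lower bound on the rate at index `n ≥ 1`, get an exponential
upper bound on `p n`. -/
lemma bound_of_rate (p : ℕ → ℝ) (hp : ∀ n, 0 ≤ p n) (b : ℝ) (n : ℕ) (hn : 1 ≤ n)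
    (h : (b : EReal) < (if p n = 0 then (⊤ : EReal)
      else ((-(1 / (n : ℝ)) * Real.log (p n) : ℝ) : EReal))) :
    p n ≤ Real.exp (-(n : ℝ) * b) := by
  by_cases h0 : p n = 0
  · rw [h0]; positivity
  · rw [if_neg h0] at h
    have hb : b < -(1 / (n : ℝ)) * Real.log (p n) := by exact_mod_cast h
    have hnpos : (0 : ℝ) < (n : ℝ) := by exact_mod_cast hn
    have hppos : 0 < p n := lt_of_le_of_ne (hp n) (Ne.symm h0)
    have : Real.log (p n) < -(n : ℝ) * b := by
      have := mul_lt_mul_of_pos_left hb hnpos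
      rw [← mul_assoc] at this
      field_simp at this ⊢
      linarith
    calc p n = Real.exp (Real.log (p n)) := (Real.exp_log hppos).symm
      _ ≤ Real.exp (-(n : ℝ) * b) := Real.exp_le_exp.mpr this.le

/-- Tradeoff lemma for exponents: if
`αₙ(a) + e^{na} βₙ(a) ≤ αₙ + e^{na} βₙ` for all `n`, then
`ζ(a) ≥ min (ζ[T], a + η[T])`. -/
theorem zeta_ge_min (a : ℝ) (αa βa α β : ℕ → ℝ)
    (hαa : ∀ n, αa n ∈ Set.Icc (0 : ℝ) 1) (hα : ∀ n, α n ∈ Set.Icc (0 : ℝ) 1)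
    (hβa : ∀ n, 0 ≤ βa n) (hβ : ∀ n, 0 ≤ β n)
    (hNP : ∀ n : ℕ, αa n + Real.exp (n * a) * βa n ≤ α n + Real.exp (n * a) * β n) :
    min (liminfExpRate β) ((a : EReal) + liminfExpRate α) ≤ liminfExpRate βa := by
  conv_rhs => rw [liminfExpRate]
  rw [Filter.le_liminf_iff]
  intro c hc
  rcases eq_or_ne c ⊥ with rfl | hcbot
  · filter_upwards with n
    split
    · exact bot_lt_top
    · exact EReal.bot_lt_coe _
  -- c is not ⊥; pick a real b' strictly between c and the min
  obtain ⟨d, hcd, hdmin⟩ := exists_between hc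
  have hdbot : d ≠ ⊥ := fun h => not_lt_bot (h ▸ hcd)
  have hdtop : d ≠ ⊤ := by
    rintro rfl
    exact absurd hdmin (by simp)
  set b : ℝ := d.toReal with hb
  have hdb : d = (b : EReal) := (EReal.coe_toReal hdtop hdbot).symm
  rw [hdb] at hcd hdmin
  have h1 : (b : EReal) < liminfExpRate β := lt_of_lt_of_le hdmin (min_le_left _ _)
  have h2 : (b : EReal) < (a : EReal) + liminfExpRate α :=
    lt_of_lt_of_le hdmin (min_le_right _ _)
  have h2' : ((b - a : ℝ) : EReal) < liminfExpRate α := by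
    by_contra hle
    push_neg at hle
    have : (a : EReal) + liminfExpRate α ≤ (a : EReal) + ((b - a : ℝ) : EReal) :=
      add_le_add le_rfl hle
    rw [← EReal.coe_add] at this
    simp only [add_sub_cancel] at this
    exact absurd (lt_of_lt_of_le h2 this) (lt_irrefl _)
  have hβev := eventually_lt_of_lt_liminf (u := fun n => if β n = 0 then (⊤ : EReal)
    else ((-(1 / (n : ℝ)) * Real.log (β n) : ℝ) : EReal)) h1
  have hαev := eventually_lt_of_lt_liminf (u := fun n => if α n = 0 then (⊤ : EReal)
    else ((-(1 / (n : ℝ)) * Real.log (α n) : ℝ) : EReal)) h2'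
  -- choose N large: n ≥ 1 and log 2 / n < b - c... we need eventually c < rate βa n
  have hcb : c < (b : EReal) := hcd
  have hcreal : c = ((c.toReal : ℝ) : EReal) :=
    (EReal.coe_toReal (fun h => by rw [h] at hcb; exact absurd hcb (by simp [not_top_lt])) hcbot).symm
  set cr : ℝ := c.toReal with hcr
  have hcrb : cr < b := by rw [hcreal] at hcb; exact_mod_cast hcb
  have hNlarge : ∀ᶠ n : ℕ in atTop, Real.log 2 / (n : ℝ) < b - cr := by
    have : Filter.Tendsto (fun n : ℕ => Real.log 2 / (n : ℝ)) atTop (nhds 0) :=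
      tendsto_const_nhds.div_atTop tendsto_natCast_atTop_atTop
    have := this.eventually (eventually_lt_nhds (by linarith : (0:ℝ) < b - cr))
    exact this
  filter_upwards [hβev, hαev, hNlarge, eventually_ge_atTop 1] with n hβn hαn hlog hn1
  -- bound βa n ≤ 2 exp(-n b)
  have hβb : β n ≤ Real.exp (-(n : ℝ) * b) := bound_of_rate β hβ b n hn1 hβn
  have hαb : α n ≤ Real.exp (-(n : ℝ) * (b - a)) := bound_of_rate α (fun m => (hα m).1) (b - a) n hn1 hαn
  have hexp : (0 : ℝ) < Real.exp ((n : ℝ) * a) := Real.exp_pos _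
  have key : βa n ≤ 2 * Real.exp (-(n : ℝ) * b) := by
    have h0 : Real.exp ((n:ℝ) * a) * βa n ≤ α n + Real.exp ((n:ℝ) * a) * β n := by
      have := hNP n
      have := (hαa n).1
      linarith
    have hinv : Real.exp (-((n:ℝ) * a)) * Real.exp ((n:ℝ) * a) = 1 := by
      rw [← Real.exp_add]; simp
    have : βa n ≤ Real.exp (-((n:ℝ) * a)) * α n + β n := by
      calc βa n = Real.exp (-((n:ℝ) * a)) * (Real.exp ((n:ℝ) * a) * βa n) := by
            rw [← mul_assoc, hinv, one_mul]
        _ ≤ Real.exp (-((n:ℝ) * a)) * (α n + Real.exp ((n:ℝ) * a) * β n) :=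
            mul_le_mul_of_nonneg_left h0 (Real.exp_pos _).le
        _ = Real.exp (-((n:ℝ) * a)) * α n + β n := by
            rw [mul_add, ← mul_assoc, hinv, one_mul]
    calc βa n ≤ Real.exp (-((n:ℝ) * a)) * α n + β n := this
      _ ≤ Real.exp (-((n:ℝ) * a)) * Real.exp (-(n : ℝ) * (b - a)) + Real.exp (-(n : ℝ) * b) := by
          gcongr
      _ = 2 * Real.exp (-(n : ℝ) * b) := by
          rw [← Real.exp_add]; ring_nf
  -- conclude c < rate βa n
  rw [hcreal]
  by_cases h0 : βa n = 0
  · rw [if_pos h0]; exact EReal.coe_lt_top _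
  · rw [if_neg h0]
    rw [EReal.coe_lt_coe_iff]
    have hppos : 0 < βa n := lt_of_le_of_ne (hβa n) (Ne.symm h0)
    have hnpos : (0 : ℝ) < (n : ℝ) := by exact_mod_cast hn1
    have hlogle : Real.log (βa n) ≤ Real.log 2 + (-(n : ℝ) * b) := by
      calc Real.log (βa n) ≤ Real.log (2 * Real.exp (-(n : ℝ) * b)) :=
            Real.log_le_log hppos key
        _ = Real.log 2 + (-(n : ℝ) * b) := by
            rw [Real.log_mul (by norm_num) (ne_of_gt (Real.exp_pos _)), Real.log_exp]
    have hmul : -(1 / (n : ℝ)) * (Real.log 2 + (-(n : ℝ) * b)) ≤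
        -(1 / (n : ℝ)) * Real.log (βa n) :=
      mul_le_mul_of_nonpos_left hlogle (by positivity |> neg_nonpos_of_nonneg)
    have hrhs : -(1 / (n : ℝ)) * (Real.log 2 + (-(n : ℝ) * b)) = b - Real.log 2 / (n : ℝ) := by
      field_simp
      ring
    linarith
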